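/- arXiv:1901.09028 — 3 statements merged into one kernel-verified Lean document; each statement's English description precedes it below -/
import Mathlib

section
/- Let T be an automorphism of a probability space (X, μ), let P ⊆ ℕ be infinite, let (S_k)_{k ∈ ℕ} be a sequence of elements of H_P(T), and let R be an automorphism of (X, μ) for which there exists a measurable function κ : X → ℕ with R(x) = S_{κ(x)}(x) for μ-almost every x. Then R ∈ H_P(T). In particular, H_P(T) coincides with its full group. -/
open MeasureTheory Filter Topology
open scoped symmDiff ENNReal

/-- The `P`-homoclinic group `H_P(T)` of an automorphism `T` of `(X, μ)`:
all measure-preserving automorphisms `S` such that for every measurable `A`,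
`μ((Tⁿ ∘ S ∘ T⁻ⁿ)(A) ∆ A) → 0` as `n → ∞` along `n ∈ P`. -/
def Homoclinic {X : Type*} [MeasurableSpace X] (μ : Measure X) (T : X ≃ᵐ X) (P : Set ℕ) :
    Set (X ≃ᵐ X) :=
  {S | MeasurePreserving (⇑S) μ μ ∧ ∀ A : Set X, MeasurableSet A →
    ∀ ε : ℝ≥0∞, 0 < ε → ∃ N : ℕ, ∀ n ∈ P, N ≤ n →
      μ (((fun x => (⇑T)^[n] (S ((⇑T.symm)^[n] x))) '' A) ∆ A) < ε}

/-- Iterates of a measurable equivalence, as a measurable equivalence. -/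
def Tpow {X : Type*} [MeasurableSpace X] (T : X ≃ᵐ X) : ℕ → X ≃ᵐ X
  | 0 => MeasurableEquiv.refl X
  | n + 1 => (Tpow T n).trans T

lemma Tpow_coe {X : Type*} [MeasurableSpace X] (T : X ≃ᵐ X) (n : ℕ) :
    ⇑(Tpow T n) = (⇑T)^[n] := by
  induction n with
  | zero => rfl
  | succ n ih =>
    funext x
    simp [Tpow, Function.iterate_succ_apply', ih, MeasurableEquiv.trans_apply]

lemma Tpow_symm_coe {X : Type*} [MeasurableSpace X] (T : X ≃ᵐ X) (n : ℕ) :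
    ⇑(Tpow T n).symm = (⇑T.symm)^[n] := by
  induction n with
  | zero => rfl
  | succ n ih =>
    funext x
    show (Tpow T n).symm (T.symm x) = (⇑T.symm)^[n + 1] x
    rw [ih, Function.iterate_succ_apply]

lemma meas_image {X : Type*} [MeasurableSpace X] {μ : Measure X} {e : X ≃ᵐ X}
    (he : MeasurePreserving (⇑e) μ μ) {B : Set X} (hB : MeasurableSet B) :
    μ (⇑e '' B) = μ B := by
  rw [MeasurableEquiv.image_eq_preimage_symm]
  exact (he.symm e).measure_preimage hB.nullMeasurableSet

/-- If `R` is an automorphism obtained by piecing together countably many elements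
`S_k ∈ H_P(T)` via a measurable index function `κ`, then `R ∈ H_P(T)`:
`H_P(T)` coincides with its full group. -/
theorem statement1 {X : Type*} [MeasurableSpace X] (μ : Measure X) [IsProbabilityMeasure μ]
    (T : X ≃ᵐ X) (hT : MeasurePreserving (⇑T) μ μ)
    (P : Set ℕ) (hP : P.Infinite)
    (S : ℕ → X ≃ᵐ X) (hS : ∀ k, S k ∈ Homoclinic μ T P)
    (R : X ≃ᵐ X) (hR : MeasurePreserving (⇑R) μ μ)
    (κ : X → ℕ) (hκ : Measurable κ)
    (hRS : ∀ᵐ x ∂μ, R x = S (κ x) x) :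
    R ∈ Homoclinic μ T P := by
  -- a measurable null set outside of which `R = S (κ ·)`
  set N₀ : Set X := toMeasurable μ {x | ¬ R x = S (κ x) x} with hN₀def
  have hN₀meas : MeasurableSet N₀ := measurableSet_toMeasurable _ _
  have hN₀null : μ N₀ = 0 := by
    rw [hN₀def, measure_toMeasurable]
    exact ae_iff.mp hRS
  have hN₀sub : {x | ¬ R x = S (κ x) x} ⊆ N₀ := subset_toMeasurable _ _
  refine ⟨hR, ?_⟩
  intro A hA ε hε
  set δ : ℝ≥0∞ := min ε 1 with hδdef
  have hδ0 : 0 < δ := lt_min hε zero_lt_one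
  have hδtop : δ ≠ ∞ := ((min_le_right ε 1).trans_lt (by norm_num)).ne
  have hδ2pos : 0 < δ / 2 := ENNReal.half_pos hδ0.ne'
  have hδ2top : δ / 2 ≠ ∞ := by
    refine (lt_of_le_of_lt ?_ (lt_top_iff_ne_top.mpr hδtop)).ne
    exact ENNReal.half_le_self
  -- choose `K` with the tail set small
  have htail : Tendsto (fun K => μ {x | K ≤ κ x}) atTop (𝓝 0) := by
    have h1 : ∀ K : ℕ, NullMeasurableSet {x | K ≤ κ x} μ := fun K =>
      (hκ measurableSet_Ici).nullMeasurableSet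
    have h2 : Antitone (fun K : ℕ => {x | K ≤ κ x}) := fun a b hab x hx =>
      le_trans hab hx
    have h3 : (⋂ K : ℕ, {x | K ≤ κ x}) = (∅ : Set X) := by
      ext x
      simp only [Set.mem_iInter, Set.mem_setOf_eq, Set.mem_empty_iff_false, iff_false, not_forall,
        not_le]
      exact ⟨κ x + 1, Nat.lt_succ_self _⟩
    have := tendsto_measure_iInter_atTop (μ := μ) h1 h2 ⟨0, measure_ne_top μ _⟩
    rwa [h3, measure_empty] at this
  obtain ⟨K, hK⟩ := (htail.eventually_lt_const hδ2pos).exists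
  -- small parameter for the finitely many pieces
  set ε' : ℝ≥0∞ := δ / 2 / (K + 1) with hε'def
  have hε'pos : 0 < ε' := ENNReal.div_pos hδ2pos.ne' (by simp)
  choose N hN using fun k => (hS k).2 A hA ε' hε'pos
  refine ⟨(Finset.range K).sup N, fun n hnP hn => ?_⟩
  set Tn : X ≃ᵐ X := Tpow T n with hTndef
  have hTnmp : MeasurePreserving (⇑Tn) μ μ := by
    rw [hTndef, Tpow_coe]; exact hT.iterate n
  set En : X ≃ᵐ X := Tn.symm.trans (R.trans Tn) with hEndef
  set Gn : ℕ → X ≃ᵐ X := fun k => Tn.symm.trans ((S k).trans Tn) with hGndef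
  have hEncoe : (fun x => (⇑T)^[n] (R ((⇑T.symm)^[n] x))) = ⇑En := by
    funext x
    simp [hEndef, MeasurableEquiv.trans_apply, hTndef, Tpow_coe, Tpow_symm_coe]
  have hGncoe : ∀ k, (fun x => (⇑T)^[n] ((S k) ((⇑T.symm)^[n] x))) = ⇑(Gn k) := by
    intro k
    funext x
    simp [hGndef, MeasurableEquiv.trans_apply, hTndef, Tpow_coe, Tpow_symm_coe]
  rw [hEncoe]
  -- the exceptional set
  set Z : Set X := {x | K ≤ κ x} ∪ N₀ with hZdef
  have hZmeas : MeasurableSet Z := (hκ measurableSet_Ici).union hN₀meas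
  have hZsmall : μ Z < δ / 2 := by
    calc μ Z ≤ μ {x | K ≤ κ x} + μ N₀ := measure_union_le _ _
    _ = μ {x | K ≤ κ x} := by rw [hN₀null, add_zero]
    _ < δ / 2 := hK
  -- key pointwise inclusion
  have hsub : (⇑En '' A) ∆ A ⊆
      (⋃ k ∈ Finset.range K, ((⇑(Gn k) '' A) ∆ A)) ∪ (⇑En '' (⇑Tn '' Z)) := by
    intro x hx
    rcases Set.mem_symmDiff.mp hx with ⟨hx1, hx2⟩ | ⟨hx1, hx2⟩
    · obtain ⟨y, hyA, hyx⟩ := hx1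
      by_cases hu : Tn.symm y ∈ Z
      · exact Or.inr ⟨y, ⟨Tn.symm y, hu, Tn.apply_symm_apply y⟩, hyx⟩
      · have huE : κ (Tn.symm y) < K := by
          by_contra h
          exact hu (Or.inl (le_of_not_gt h))
        have hRu : R (Tn.symm y) = S (κ (Tn.symm y)) (Tn.symm y) := by
          by_contra h
          exact hu (Or.inr (hN₀sub h))
        have hx' : x = Gn (κ (Tn.symm y)) y := by
          rw [← hyx]
          simp [hEndef, hGndef, MeasurableEquiv.trans_apply, hRu]
        refine Or.inl (Set.mem_iUnion₂.mpr ⟨κ (Tn.symm y), Finset.mem_range.mpr huE, ?_⟩)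
        exact Set.mem_symmDiff.mpr (Or.inl ⟨⟨y, hyA, hx'.symm⟩, hx2⟩)
    · set y : X := En.symm x with hydef
      have hxy : En y = x := En.apply_symm_apply x
      by_cases hu : Tn.symm y ∈ Z
      · exact Or.inr ⟨y, ⟨Tn.symm y, hu, Tn.apply_symm_apply y⟩, hxy⟩
      · have huE : κ (Tn.symm y) < K := by
          by_contra h
          exact hu (Or.inl (le_of_not_gt h))
        have hRu : R (Tn.symm y) = S (κ (Tn.symm y)) (Tn.symm y) := by
          by_contra h
          exact hu (Or.inr (hN₀sub h))
        have hx' : x = Gn (κ (Tn.symm y)) y := by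
          rw [← hxy]
          simp [hEndef, hGndef, MeasurableEquiv.trans_apply, hRu]
        have hyA : y ∉ A := fun h => hx2 ⟨y, h, hxy⟩
        have hxG : x ∉ ⇑(Gn (κ (Tn.symm y))) '' A := by
          rintro ⟨z, hzA, hz⟩
          exact hyA ((Gn (κ (Tn.symm y))).injective (hz.trans hx') ▸ hzA)
        refine Or.inl (Set.mem_iUnion₂.mpr ⟨κ (Tn.symm y), Finset.mem_range.mpr huE, ?_⟩)
        exact Set.mem_symmDiff.mpr (Or.inr ⟨hx1, hxG⟩)
  -- measure estimates
  have hEnmp : MeasurePreserving (⇑En) μ μ := by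
    have : ⇑En = (⇑Tn ∘ ⇑R) ∘ ⇑Tn.symm := by
      funext x; simp [hEndef, MeasurableEquiv.trans_apply]
    rw [this]
    exact (hTnmp.comp hR).comp (hTnmp.symm Tn)
  have himg : μ (⇑En '' (⇑Tn '' Z)) = μ Z := by
    rw [meas_image hEnmp, meas_image hTnmp hZmeas]
    rw [MeasurableEquiv.image_eq_preimage_symm]
    exact Tn.symm.measurable hZmeas
  have hsum : ∑ k ∈ Finset.range K, μ ((⇑(Gn k) '' A) ∆ A) ≤ δ / 2 := by
    calc ∑ k ∈ Finset.range K, μ ((⇑(Gn k) '' A) ∆ A)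
        ≤ ∑ _k ∈ Finset.range K, ε' := by
          refine Finset.sum_le_sum fun k hk => ?_
          have := hN k n hnP (le_trans (Finset.le_sup hk) hn)
          rw [hGncoe k] at this
          exact this.le
    _ = (K : ℝ≥0∞) * ε' := by rw [Finset.sum_const, Finset.card_range, nsmul_eq_mul]
    _ ≤ ((K : ℝ≥0∞) + 1) * ε' := by
          exact mul_le_mul_left (le_add_of_nonneg_right zero_le_one) _
    _ ≤ δ / 2 := by
          rw [hε'def]
          exact ENNReal.mul_div_le
  calc μ ((⇑En '' A) ∆ A)
      ≤ μ ((⋃ k ∈ Finset.range K, ((⇑(Gn k) '' A) ∆ A)) ∪ (⇑En '' (⇑Tn '' Z))) :=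
        measure_mono hsub
    _ ≤ μ (⋃ k ∈ Finset.range K, ((⇑(Gn k) '' A) ∆ A)) + μ (⇑En '' (⇑Tn '' Z)) :=
        measure_union_le _ _
    _ ≤ (∑ k ∈ Finset.range K, μ ((⇑(Gn k) '' A) ∆ A)) + μ Z := by
        rw [himg]
        exact add_le_add_left (measure_biUnion_finset_le _ _) _
    _ < δ / 2 + δ / 2 := ENNReal.add_lt_add_of_le_of_lt (ne_top_of_le_ne_top hδ2top hsum) hsum hZsmall
    _ = δ := ENNReal.add_halves δ
    _ ≤ ε := min_le_left ε 1
end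

section
/- Let T be an automorphism of a probability space (X, μ), let (S_k)_{k ∈ ℕ} be a sequence of elements of WH(T), and let R be an automorphism of (X, μ) for which there exists a measurable function κ : X → ℕ with R(x) = S_{κ(x)}(x) for μ-almost every x. Then R ∈ WH(T). In particular, WH(T) coincides with its full group. -/
open MeasureTheory Filter Topology
open scoped symmDiff ENNReal

/-- The weakly homoclinic group `WH(T)`: all measure-preserving automorphisms `S` such that
for every `f ∈ L²(X, μ)`, `(1/N) ∑_{i=1}^{N} f ∘ (Tⁱ ∘ S ∘ T⁻ⁱ) → f` in `L²`. -/
def WeaklyHomoclinic {X : Type*} [MeasurableSpace X] (μ : Measure X) (T : X ≃ᵐ X) :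
    Set (X ≃ᵐ X) :=
  {S | MeasurePreserving (⇑S) μ μ ∧ ∀ f : X → ℝ, MemLp f 2 μ →
    Tendsto (fun N : ℕ => eLpNorm (fun x =>
      (N : ℝ)⁻¹ * ∑ i ∈ Finset.Icc 1 N, f ((⇑T)^[i] (S ((⇑T.symm)^[i] x))) - f x) 2 μ)
      atTop (𝓝 0)}

lemma lp_coeFn_finset_sum {X : Type*} [MeasurableSpace X] {μ : Measure X} {ι : Type*}
    (s : Finset ι) (F : ι → Lp ℝ 2 μ) :
    ⇑(∑ i ∈ s, F i) =ᵐ[μ] fun x => ∑ i ∈ s, F i x := by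
  classical
  induction s using Finset.induction_on with
  | empty =>
    simp only [Finset.sum_empty]
    filter_upwards [Lp.coeFn_zero (E := ℝ) (p := 2) (μ := μ)] with x hx
    simpa using hx
  | insert a s h ih =>
    rw [Finset.sum_insert h]
    filter_upwards [Lp.coeFn_add (F a) (∑ i ∈ s, F i), ih] with x h1 h2
    rw [Finset.sum_insert h, h1, Pi.add_apply, h2]

lemma lemA {X : Type*} [MeasurableSpace X] (μ : Measure X) [IsProbabilityMeasure μ]
    (T : X ≃ᵐ X) (hT : MeasurePreserving (⇑T) μ μ) (Sk : X ≃ᵐ X)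
    (hSk : Sk ∈ WeaklyHomoclinic μ T) (g : X → ℝ) (hg : MemLp g 2 μ) :
    Tendsto (fun N : ℕ => (N : ℝ≥0∞)⁻¹ * ∑ i ∈ Finset.Icc 1 N,
      eLpNorm (fun x => g ((⇑T)^[i] (Sk ((⇑T.symm)^[i] x))) - g x) 2 μ) atTop (𝓝 0) := by
  have mpψ : ∀ i : ℕ, MeasurePreserving (fun x => (⇑T)^[i] (Sk ((⇑T.symm)^[i] x))) μ μ :=
    fun i => (hT.iterate i).comp (hSk.1.comp ((hT.symm T).iterate i))
  have hgi : ∀ i : ℕ, MemLp (fun x => g ((⇑T)^[i] (Sk ((⇑T.symm)^[i] x)))) 2 μ :=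
    fun i => hg.comp_measurePreserving (mpψ i)
  set G : Lp ℝ 2 μ := hg.toLp g with hGdef
  set Gi : ℕ → Lp ℝ 2 μ := fun i => (hgi i).toLp _ with hGidef
  have hnormGi : ∀ i, ‖Gi i‖ = ‖G‖ := by
    intro i
    rw [hGidef, hGdef, Lp.norm_toLp, Lp.norm_toLp]
    congr 1
    exact eLpNorm_comp_measurePreserving (p := 2) hg.1 (mpψ i)
  have hGiG : ∀ i, ⇑(Gi i - G) =ᵐ[μ]
      fun x => g ((⇑T)^[i] (Sk ((⇑T.symm)^[i] x))) - g x := by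
    intro i
    filter_upwards [Lp.coeFn_sub (Gi i) G, (hgi i).coeFn_toLp, hg.coeFn_toLp] with x h1 h2 h3
    rw [h1, Pi.sub_apply, h2, h3]
  set b : ℕ → ℝ := fun i => ‖Gi i - G‖ with hbdef
  have hb0 : ∀ i, 0 ≤ b i := fun i => norm_nonneg _
  have hb2 : ∀ i, b i ^ 2 = 2 * ‖G‖ ^ 2 - 2 * (inner ℝ (Gi i) G : ℝ) := by
    intro i
    rw [hbdef]
    simp only
    rw [norm_sub_sq_real, hnormGi]
    ring
  set A : ℕ → Lp ℝ 2 μ := fun N => (N : ℝ)⁻¹ • ∑ i ∈ Finset.Icc 1 N, Gi i with hAdef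
  -- ‖G - A N‖ → 0
  have hGA : Tendsto (fun N => ‖G - A N‖) atTop (𝓝 0) := by
    have h0 := hSk.2 g hg
    have h1 : Tendsto (fun N : ℕ => (eLpNorm (fun x =>
        (N : ℝ)⁻¹ * ∑ i ∈ Finset.Icc 1 N, g ((⇑T)^[i] (Sk ((⇑T.symm)^[i] x))) - g x)
        2 μ).toReal) atTop (𝓝 0) := by
      have := (ENNReal.tendsto_toReal (by simp)).comp h0
      exact this
    refine h1.congr fun N => ?_
    rw [Lp.norm_def]
    congr 1
    have hcoe : ⇑(G - A N) =ᵐ[μ] fun x =>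
        g x - (N : ℝ)⁻¹ * ∑ i ∈ Finset.Icc 1 N, g ((⇑T)^[i] (Sk ((⇑T.symm)^[i] x))) := by
      filter_upwards [Lp.coeFn_sub G (A N), hg.coeFn_toLp,
        Lp.coeFn_smul ((N:ℝ)⁻¹) (∑ i ∈ Finset.Icc 1 N, Gi i),
        lp_coeFn_finset_sum (Finset.Icc 1 N) Gi,
        ae_all_iff.2 (fun i : ℕ => (hgi i).coeFn_toLp)] with x h1 h2 h3 h4 h5
      rw [h1, Pi.sub_apply, h2, hAdef]
      simp only
      rw [h3, Pi.smul_apply, h4, smul_eq_mul]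
      congr 2
      exact Finset.sum_congr rfl fun i _ => h5 i
    rw [eLpNorm_congr_ae hcoe]
    exact eLpNorm_sub_comm _ _ 2 μ
  -- average of squares tends to zero
  have hq : Tendsto (fun N : ℕ => (N : ℝ)⁻¹ * ∑ i ∈ Finset.Icc 1 N, b i ^ 2) atTop (𝓝 0) := by
    have hbound : ∀ᶠ N : ℕ in atTop, (N : ℝ)⁻¹ * ∑ i ∈ Finset.Icc 1 N, b i ^ 2
        ≤ 2 * (‖G - A N‖ * ‖G‖) := by
      filter_upwards [eventually_ge_atTop 1] with N hN
      have hNne : (N : ℝ) ≠ 0 := Nat.cast_ne_zero.2 (by omega)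
      have hinner : (inner ℝ (A N) G : ℝ)
          = (N : ℝ)⁻¹ * ∑ i ∈ Finset.Icc 1 N, (inner ℝ (Gi i) G : ℝ) := by
        rw [hAdef]
        simp only
        rw [real_inner_smul_left, sum_inner]
      have hcard : (Finset.Icc 1 N).card = N := by
        rw [Nat.card_Icc]; omega
      have heq : (N : ℝ)⁻¹ * ∑ i ∈ Finset.Icc 1 N, b i ^ 2
          = 2 * (inner ℝ (G - A N) G : ℝ) := by
        rw [inner_sub_left, hinner, real_inner_self_eq_norm_sq]
        have : ∑ i ∈ Finset.Icc 1 N, b i ^ 2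
            = ∑ i ∈ Finset.Icc 1 N, (2 * ‖G‖ ^ 2 - 2 * (inner ℝ (Gi i) G : ℝ)) :=
          Finset.sum_congr rfl fun i _ => hb2 i
        rw [this, Finset.sum_sub_distrib, Finset.sum_const, hcard, ← Finset.mul_sum]
        field_simp
        ring
      rw [heq]
      have := real_inner_le_norm (G - A N) G
      nlinarith
    have hnonneg : ∀ᶠ N : ℕ in atTop, 0 ≤ (N : ℝ)⁻¹ * ∑ i ∈ Finset.Icc 1 N, b i ^ 2 := by
      filter_upwards with N
      positivity
    have hg2 : Tendsto (fun N : ℕ => 2 * (‖G - A N‖ * ‖G‖)) atTop (𝓝 0) := by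
      have := (hGA.mul_const ‖G‖).const_mul 2
      simpa using this
    exact squeeze_zero' hnonneg hbound hg2
  -- average of b tends to zero
  have hc : Tendsto (fun N : ℕ => (N : ℝ)⁻¹ * ∑ i ∈ Finset.Icc 1 N, b i) atTop (𝓝 0) := by
    have hsq : Tendsto (fun N : ℕ => Real.sqrt ((N : ℝ)⁻¹ * ∑ i ∈ Finset.Icc 1 N, b i ^ 2))
        atTop (𝓝 0) := by
      have := (Real.continuous_sqrt.tendsto 0).comp hq
      rw [Real.sqrt_zero] at this
      exact this
    refine squeeze_zero' (by filter_upwards with N; positivity) ?_ hsq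
    filter_upwards [eventually_ge_atTop 1] with N hN
    have hNpos : (0 : ℝ) < N := by exact_mod_cast Nat.lt_of_lt_of_le Nat.zero_lt_one hN
    have hNne : (N : ℝ) ≠ 0 := ne_of_gt hNpos
    have hcard : (Finset.Icc 1 N).card = N := by rw [Nat.card_Icc]; omega
    rw [show ((N : ℝ)⁻¹ * ∑ i ∈ Finset.Icc 1 N, b i) = |(N : ℝ)⁻¹ * ∑ i ∈ Finset.Icc 1 N, b i|
      from (abs_of_nonneg (by positivity)).symm]
    rw [← Real.sqrt_sq_eq_abs]
    apply Real.sqrt_le_sqrt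
    have hcs : (∑ i ∈ Finset.Icc 1 N, b i) ^ 2
        ≤ (N : ℝ) * ∑ i ∈ Finset.Icc 1 N, b i ^ 2 := by
      have := sq_sum_le_card_mul_sum_sq (s := Finset.Icc 1 N) (f := b)
      rw [hcard] at this
      exact_mod_cast this
    calc ((N : ℝ)⁻¹ * ∑ i ∈ Finset.Icc 1 N, b i) ^ 2
        = (N : ℝ)⁻¹ ^ 2 * (∑ i ∈ Finset.Icc 1 N, b i) ^ 2 := by ring
      _ ≤ (N : ℝ)⁻¹ ^ 2 * ((N : ℝ) * ∑ i ∈ Finset.Icc 1 N, b i ^ 2) := by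
          apply mul_le_mul_of_nonneg_left hcs (by positivity)
      _ = (N : ℝ)⁻¹ * ∑ i ∈ Finset.Icc 1 N, b i ^ 2 := by field_simp
  -- conversion to ℝ≥0∞
  have hfin : ∀ i : ℕ, eLpNorm (fun x => g ((⇑T)^[i] (Sk ((⇑T.symm)^[i] x))) - g x) 2 μ
      = ENNReal.ofReal (b i) := by
    intro i
    have hmem : MemLp (fun x => g ((⇑T)^[i] (Sk ((⇑T.symm)^[i] x))) - g x) 2 μ := by
      have := (hgi i).sub hg
      exact this
    have h1 : b i = (eLpNorm (fun x => g ((⇑T)^[i] (Sk ((⇑T.symm)^[i] x))) - g x) 2 μ).toReal := by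
      rw [hbdef]
      simp only
      rw [Lp.norm_def, eLpNorm_congr_ae (hGiG i)]
    rw [h1, ENNReal.ofReal_toReal hmem.2.ne]
  have hfinal := (ENNReal.continuous_ofReal.tendsto 0).comp hc
  rw [ENNReal.ofReal_zero] at hfinal
  refine Tendsto.congr' ?_ hfinal
  filter_upwards [eventually_ge_atTop 1] with N hN
  have hNpos : (0 : ℝ) < N := by exact_mod_cast Nat.lt_of_lt_of_le Nat.zero_lt_one hN
  simp only [Function.comp_apply]
  rw [ENNReal.ofReal_mul (by positivity), ENNReal.ofReal_sum_of_nonneg (fun i _ => hb0 i),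
    ENNReal.ofReal_inv_of_pos hNpos, ENNReal.ofReal_natCast]
  congr 1
  exact Finset.sum_congr rfl fun i _ => (hfin i).symm

/-- If `R` is an automorphism obtained by piecing together countably many elements
`S_k ∈ WH(T)` via a measurable index function `κ`, then `R ∈ WH(T)`:
`WH(T)` coincides with its full group. -/
theorem statement2 {X : Type*} [MeasurableSpace X] (μ : Measure X) [IsProbabilityMeasure μ]
    (T : X ≃ᵐ X) (hT : MeasurePreserving (⇑T) μ μ)
    (S : ℕ → X ≃ᵐ X) (hS : ∀ k, S k ∈ WeaklyHomoclinic μ T)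
    (R : X ≃ᵐ X) (hR : MeasurePreserving (⇑R) μ μ)
    (κ : X → ℕ) (hκ : Measurable κ)
    (hRS : ∀ᵐ x ∂μ, R x = S (κ x) x) :
    R ∈ WeaklyHomoclinic μ T := by
  refine ⟨hR, fun f hf => ?_⟩
  rw [ENNReal.tendsto_atTop_zero]
  intro ε hε
  -- choose a small real ε
  set m : ℝ≥0∞ := min ε 1 with hmdef
  have hm0 : m ≠ 0 := by
    simp only [hmdef, ne_eq, min_eq_iff, not_or]
    push_neg
    constructor
    · intro h; exact absurd h hε.ne'
    · intro h; exact absurd h one_ne_zero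
  have hmtop : m ≠ ⊤ := by
    refine ne_top_of_le_ne_top ?_ (min_le_right ε 1)
    exact ENNReal.one_ne_top
  set εr : ℝ := m.toReal / 3 with hεrdef
  have hεrpos : 0 < εr := by
    have : 0 < m.toReal := ENNReal.toReal_pos hm0 hmtop
    positivity
  have h3ε : ENNReal.ofReal εr + 2 * ENNReal.ofReal εr ≤ ε := by
    have hofReal : ENNReal.ofReal εr = m / 3 := by
      rw [hεrdef, ENNReal.ofReal_div_of_pos (by norm_num), ENNReal.ofReal_toReal hmtop]
      norm_num
    have : ENNReal.ofReal εr + 2 * ENNReal.ofReal εr = 3 * ENNReal.ofReal εr := by ring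
    rw [this, hofReal, ENNReal.mul_div_cancel' (by norm_num) (by norm_num)]
    exact min_le_left _ _
  obtain ⟨δ, hδpos, hind⟩ := hf.eLpNorm_indicator_le (p := 2) one_le_two (by norm_num) hεrpos
  -- choose K with small tail
  obtain ⟨K, hK⟩ : ∃ K : ℕ, μ (κ ⁻¹' Set.Ici K) ≤ ENNReal.ofReal δ := by
    have htail : Tendsto (fun K : ℕ => μ (κ ⁻¹' Set.Ici K)) atTop (𝓝 0) := by
      have h := tendsto_measure_iInter_atTop (μ := μ) (s := fun K : ℕ => κ ⁻¹' Set.Ici K)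
        (fun K => (hκ measurableSet_Ici).nullMeasurableSet)
        (fun a b hab => Set.preimage_mono (Set.Ici_subset_Ici.2 hab))
        ⟨0, measure_ne_top μ _⟩
      have hempty : ⋂ K : ℕ, κ ⁻¹' Set.Ici K = ∅ := by
        ext x
        simp only [Set.mem_iInter, Set.mem_preimage, Set.mem_Ici, Set.mem_empty_iff_false,
          iff_false, not_forall]
        exact ⟨κ x + 1, by omega⟩
      rw [hempty, measure_empty] at h
      exact h
    rw [ENNReal.tendsto_atTop_zero] at htail
    obtain ⟨K, hK⟩ := htail (ENNReal.ofReal δ) (ENNReal.ofReal_pos.2 hδpos)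
    exact ⟨K, hK K le_rfl⟩
  -- per-k Cesàro convergence of norms, summed over k < K
  have hck : Tendsto (fun N : ℕ => ∑ k ∈ Finset.range K, ((N : ℝ≥0∞)⁻¹ *
      ∑ i ∈ Finset.Icc 1 N,
        eLpNorm (fun x => f ((⇑T)^[i] ((S k) ((⇑T.symm)^[i] x))) - f x) 2 μ))
      atTop (𝓝 0) := by
    have := tendsto_finset_sum (Finset.range K)
      (fun k (_ : k ∈ Finset.range K) => lemA μ T hT (S k) (hS k) f hf)
    simpa using this
  obtain ⟨N₀, hN₀⟩ : ∃ N₀ : ℕ, ∀ N ≥ N₀, ∑ k ∈ Finset.range K, ((N : ℝ≥0∞)⁻¹ *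
      ∑ i ∈ Finset.Icc 1 N,
        eLpNorm (fun x => f ((⇑T)^[i] ((S k) ((⇑T.symm)^[i] x))) - f x) 2 μ)
      ≤ ENNReal.ofReal εr := by
    rw [ENNReal.tendsto_atTop_zero] at hck
    exact hck _ (ENNReal.ofReal_pos.2 hεrpos)
  refine ⟨max N₀ 1, fun N hN => ?_⟩
  have hN1 : 1 ≤ N := le_trans (le_max_right _ _) hN
  have hNN₀ : N₀ ≤ N := le_trans (le_max_left _ _) hN
  have hNne : (N : ℝ) ≠ 0 := Nat.cast_ne_zero.2 (by omega)
  have hcard : (Finset.Icc 1 N).card = N := by rw [Nat.card_Icc]; omega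
  have hnn : ((‖(N : ℝ)⁻¹‖₊ : NNReal) : ℝ≥0∞) = (N : ℝ≥0∞)⁻¹ := by
    rw [nnnorm_inv]
    rw [ENNReal.coe_inv (by simpa using hNne)]
    congr 1
    simp
  -- measure-preserving maps
  have mpφ : ∀ i : ℕ, MeasurePreserving (fun x => (⇑T)^[i] (R ((⇑T.symm)^[i] x))) μ μ :=
    fun i => (hT.iterate i).comp (hR.comp ((hT.symm T).iterate i))
  have mpψ : ∀ k i : ℕ, MeasurePreserving (fun x => (⇑T)^[i] ((S k) ((⇑T.symm)^[i] x))) μ μ :=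
    fun k i => (hT.iterate i).comp ((hS k).1.comp ((hT.symm T).iterate i))
  -- measurable sets
  have mset1 : ∀ i k : ℕ, MeasurableSet {z : X | κ ((⇑T.symm)^[i] z) = k} :=
    fun i k => (hκ.comp (T.symm.measurable.iterate i)) (measurableSet_singleton k)
  have mset2 : ∀ i : ℕ, MeasurableSet {z : X | K ≤ κ ((⇑T.symm)^[i] z)} :=
    fun i => (hκ.comp (T.symm.measurable.iterate i)) measurableSet_Ici
  -- a.e. measurability of pieces
  have hAEψ : ∀ k i : ℕ,
      AEStronglyMeasurable (fun z => f ((⇑T)^[i] ((S k) ((⇑T.symm)^[i] z))) - f z) μ := by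
    intro k i
    exact (hf.1.comp_measurePreserving (mpψ k i)).sub hf.1
  have hAEφ : ∀ i : ℕ,
      AEStronglyMeasurable (fun z => f ((⇑T)^[i] (R ((⇑T.symm)^[i] z))) - f z) μ := by
    intro i
    exact (hf.1.comp_measurePreserving (mpφ i)).sub hf.1
  -- a.e. decomposition
  have hae : ∀ᵐ x ∂μ, ∀ i : ℕ,
      R ((⇑T.symm)^[i] x) = S (κ ((⇑T.symm)^[i] x)) ((⇑T.symm)^[i] x) := by
    rw [ae_all_iff]
    intro i
    exact ((hT.symm T).iterate i).quasiMeasurePreserving.ae hRS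
  have hdecomp : (fun x =>
      (N : ℝ)⁻¹ * ∑ i ∈ Finset.Icc 1 N, f ((⇑T)^[i] (R ((⇑T.symm)^[i] x))) - f x)
      =ᵐ[μ] fun x =>
        (∑ k ∈ Finset.range K, ((N : ℝ)⁻¹ * ∑ i ∈ Finset.Icc 1 N,
          Set.indicator {z : X | κ ((⇑T.symm)^[i] z) = k}
            (fun z => f ((⇑T)^[i] ((S k) ((⇑T.symm)^[i] z))) - f z) x))
        + ((N : ℝ)⁻¹ * ∑ i ∈ Finset.Icc 1 N,
          Set.indicator {z : X | K ≤ κ ((⇑T.symm)^[i] z)}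
            (fun z => f ((⇑T)^[i] (R ((⇑T.symm)^[i] z))) - f z) x) := by
    filter_upwards [hae] with x hx
    have hterm : ∀ i ∈ Finset.Icc 1 N,
        f ((⇑T)^[i] (R ((⇑T.symm)^[i] x))) - f x
        = (∑ k ∈ Finset.range K, Set.indicator {z : X | κ ((⇑T.symm)^[i] z) = k}
            (fun z => f ((⇑T)^[i] ((S k) ((⇑T.symm)^[i] z))) - f z) x)
          + Set.indicator {z : X | K ≤ κ ((⇑T.symm)^[i] z)}
            (fun z => f ((⇑T)^[i] (R ((⇑T.symm)^[i] z))) - f z) x := by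
      intro i _
      simp only [Set.indicator_apply, Set.mem_setOf_eq]
      rw [Finset.sum_ite_eq]
      by_cases hk : κ ((⇑T.symm)^[i] x) < K
      · rw [if_pos (Finset.mem_range.2 hk), if_neg (by omega), add_zero, hx i]
      · rw [if_neg (fun h => hk (Finset.mem_range.1 h)), if_pos (by omega), zero_add]
    calc (N : ℝ)⁻¹ * ∑ i ∈ Finset.Icc 1 N, f ((⇑T)^[i] (R ((⇑T.symm)^[i] x))) - f x
        = (N : ℝ)⁻¹ * ∑ i ∈ Finset.Icc 1 N, (f ((⇑T)^[i] (R ((⇑T.symm)^[i] x))) - f x) := by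
          rw [Finset.sum_sub_distrib, Finset.sum_const, hcard, nsmul_eq_mul, mul_sub,
            ← mul_assoc, inv_mul_cancel₀ hNne, one_mul]
      _ = (N : ℝ)⁻¹ * ∑ i ∈ Finset.Icc 1 N,
            ((∑ k ∈ Finset.range K, Set.indicator {z : X | κ ((⇑T.symm)^[i] z) = k}
              (fun z => f ((⇑T)^[i] ((S k) ((⇑T.symm)^[i] z))) - f z) x)
            + Set.indicator {z : X | K ≤ κ ((⇑T.symm)^[i] z)}
              (fun z => f ((⇑T)^[i] (R ((⇑T.symm)^[i] z))) - f z) x) := by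
          rw [Finset.sum_congr rfl hterm]
      _ = _ := by
          rw [Finset.sum_add_distrib, mul_add, Finset.sum_comm, Finset.mul_sum]
  rw [eLpNorm_congr_ae hdecomp]
  -- split the eLpNorm
  have hP : ∀ k ∈ Finset.range K, eLpNorm (fun x => (N : ℝ)⁻¹ * ∑ i ∈ Finset.Icc 1 N,
      Set.indicator {z : X | κ ((⇑T.symm)^[i] z) = k}
        (fun z => f ((⇑T)^[i] ((S k) ((⇑T.symm)^[i] z))) - f z) x) 2 μ
      ≤ (N : ℝ≥0∞)⁻¹ * ∑ i ∈ Finset.Icc 1 N,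
        eLpNorm (fun x => f ((⇑T)^[i] ((S k) ((⇑T.symm)^[i] x))) - f x) 2 μ := by
    intro k _
    have h1 : (fun x => (N : ℝ)⁻¹ * ∑ i ∈ Finset.Icc 1 N,
        Set.indicator {z : X | κ ((⇑T.symm)^[i] z) = k}
          (fun z => f ((⇑T)^[i] ((S k) ((⇑T.symm)^[i] z))) - f z) x)
        = (N : ℝ)⁻¹ • fun x => ∑ i ∈ Finset.Icc 1 N,
          Set.indicator {z : X | κ ((⇑T.symm)^[i] z) = k}
            (fun z => f ((⇑T)^[i] ((S k) ((⇑T.symm)^[i] z))) - f z) x := rfl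
    rw [h1, eLpNorm_const_smul, enorm_eq_nnnorm, hnn]
    refine mul_le_mul_right ?_ _
    have h2 : (fun x => ∑ i ∈ Finset.Icc 1 N,
        Set.indicator {z : X | κ ((⇑T.symm)^[i] z) = k}
          (fun z => f ((⇑T)^[i] ((S k) ((⇑T.symm)^[i] z))) - f z) x)
        = ∑ i ∈ Finset.Icc 1 N, Set.indicator {z : X | κ ((⇑T.symm)^[i] z) = k}
          (fun z => f ((⇑T)^[i] ((S k) ((⇑T.symm)^[i] z))) - f z) :=
      funext fun x => (Finset.sum_apply _ _ _).symm
    rw [h2]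
    refine (eLpNorm_sum_le (fun i _ => (hAEψ k i).indicator (mset1 i k)) one_le_two).trans ?_
    exact Finset.sum_le_sum fun i _ => eLpNorm_indicator_le _
  have hWterm : ∀ i ∈ Finset.Icc 1 N, eLpNorm (Set.indicator {z : X | K ≤ κ ((⇑T.symm)^[i] z)}
      (fun z => f ((⇑T)^[i] (R ((⇑T.symm)^[i] z))) - f z)) 2 μ
      ≤ ENNReal.ofReal εr + ENNReal.ofReal εr := by
    intro i _
    have hsplit : Set.indicator {z : X | K ≤ κ ((⇑T.symm)^[i] z)}
        (fun z => f ((⇑T)^[i] (R ((⇑T.symm)^[i] z))) - f z)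
        = fun x => Set.indicator {z : X | K ≤ κ ((⇑T.symm)^[i] z)}
            (fun z => f ((⇑T)^[i] (R ((⇑T.symm)^[i] z)))) x
          - Set.indicator {z : X | K ≤ κ ((⇑T.symm)^[i] z)} f x := by
      funext x
      by_cases hx : x ∈ {z : X | K ≤ κ ((⇑T.symm)^[i] z)} <;>
        simp [Set.indicator_apply, hx]
    rw [hsplit]
    have hμB : μ {z : X | K ≤ κ ((⇑T.symm)^[i] z)} ≤ ENNReal.ofReal δ := by
      have heq : {z : X | K ≤ κ ((⇑T.symm)^[i] z)} = (⇑T.symm)^[i] ⁻¹' (κ ⁻¹' Set.Ici K) := rfl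
      rw [heq, ((hT.symm T).iterate i).measure_preimage
        ((hκ measurableSet_Ici).nullMeasurableSet)]
      exact hK
    have hpart2 : eLpNorm (Set.indicator {z : X | K ≤ κ ((⇑T.symm)^[i] z)} f) 2 μ
        ≤ ENNReal.ofReal εr := hind _ (mset2 i) hμB
    have hpart1 : eLpNorm (Set.indicator {z : X | K ≤ κ ((⇑T.symm)^[i] z)}
        (fun z => f ((⇑T)^[i] (R ((⇑T.symm)^[i] z))))) 2 μ ≤ ENNReal.ofReal εr := by
      have hCmeas : MeasurableSet {z : X | K ≤ κ (R.symm ((⇑T.symm)^[i] z))} :=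
        (hκ.comp (R.symm.measurable.comp (T.symm.measurable.iterate i))) measurableSet_Ici
      have hiter : ∀ z : X, (⇑T.symm)^[i] ((⇑T)^[i] z) = z :=
        Function.LeftInverse.iterate T.symm_apply_apply i
      have hcomp : Set.indicator {z : X | K ≤ κ ((⇑T.symm)^[i] z)}
          (fun z => f ((⇑T)^[i] (R ((⇑T.symm)^[i] z))))
          = (Set.indicator {z : X | K ≤ κ (R.symm ((⇑T.symm)^[i] z))} f)
            ∘ (fun z => (⇑T)^[i] (R ((⇑T.symm)^[i] z))) := by
        funext x
        by_cases hx : x ∈ {z : X | K ≤ κ ((⇑T.symm)^[i] z)}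
        · rw [Set.indicator_of_mem hx, Function.comp_apply, Set.indicator_of_mem]
          show K ≤ κ (R.symm ((⇑T.symm)^[i] ((⇑T)^[i] (R ((⇑T.symm)^[i] x)))))
          rw [hiter, R.symm_apply_apply]
          exact hx
        · rw [Set.indicator_of_notMem hx, Function.comp_apply, Set.indicator_of_notMem]
          intro hmem
          apply hx
          have hmem' : K ≤ κ (R.symm ((⇑T.symm)^[i] ((⇑T)^[i] (R ((⇑T.symm)^[i] x))))) := hmem
          rw [hiter, R.symm_apply_apply] at hmem'
          exact hmem'
      rw [hcomp, eLpNorm_comp_measurePreserving (hf.1.indicator hCmeas) (mpφ i)]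
      refine hind _ hCmeas ?_
      have heq : {z : X | K ≤ κ (R.symm ((⇑T.symm)^[i] z))}
          = (⇑R.symm ∘ (⇑T.symm)^[i]) ⁻¹' (κ ⁻¹' Set.Ici K) := rfl
      rw [heq, ((hR.symm R).comp ((hT.symm T).iterate i)).measure_preimage
        ((hκ measurableSet_Ici).nullMeasurableSet)]
      exact hK
    exact (eLpNorm_sub_le ((hf.1.comp_measurePreserving (mpφ i)).indicator (mset2 i))
      (hf.1.indicator (mset2 i)) one_le_two).trans (add_le_add hpart1 hpart2)
  have hW : eLpNorm (fun x => (N : ℝ)⁻¹ * ∑ i ∈ Finset.Icc 1 N,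
      Set.indicator {z : X | K ≤ κ ((⇑T.symm)^[i] z)}
        (fun z => f ((⇑T)^[i] (R ((⇑T.symm)^[i] z))) - f z) x) 2 μ
      ≤ 2 * ENNReal.ofReal εr := by
    have h1 : (fun x => (N : ℝ)⁻¹ * ∑ i ∈ Finset.Icc 1 N,
        Set.indicator {z : X | K ≤ κ ((⇑T.symm)^[i] z)}
          (fun z => f ((⇑T)^[i] (R ((⇑T.symm)^[i] z))) - f z) x)
        = (N : ℝ)⁻¹ • fun x => ∑ i ∈ Finset.Icc 1 N,
          Set.indicator {z : X | K ≤ κ ((⇑T.symm)^[i] z)}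
            (fun z => f ((⇑T)^[i] (R ((⇑T.symm)^[i] z))) - f z) x := rfl
    rw [h1, eLpNorm_const_smul, enorm_eq_nnnorm, hnn]
    have h2 : (fun x => ∑ i ∈ Finset.Icc 1 N,
        Set.indicator {z : X | K ≤ κ ((⇑T.symm)^[i] z)}
          (fun z => f ((⇑T)^[i] (R ((⇑T.symm)^[i] z))) - f z) x)
        = ∑ i ∈ Finset.Icc 1 N, Set.indicator {z : X | K ≤ κ ((⇑T.symm)^[i] z)}
          (fun z => f ((⇑T)^[i] (R ((⇑T.symm)^[i] z))) - f z) :=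
      funext fun x => (Finset.sum_apply _ _ _).symm
    rw [h2]
    calc (N : ℝ≥0∞)⁻¹ * eLpNorm (∑ i ∈ Finset.Icc 1 N,
          Set.indicator {z : X | K ≤ κ ((⇑T.symm)^[i] z)}
            (fun z => f ((⇑T)^[i] (R ((⇑T.symm)^[i] z))) - f z)) 2 μ
        ≤ (N : ℝ≥0∞)⁻¹ * ∑ i ∈ Finset.Icc 1 N,
          eLpNorm (Set.indicator {z : X | K ≤ κ ((⇑T.symm)^[i] z)}
            (fun z => f ((⇑T)^[i] (R ((⇑T.symm)^[i] z))) - f z)) 2 μ := by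
          exact mul_le_mul_right
            (eLpNorm_sum_le (fun i _ => (hAEφ i).indicator (mset2 i)) one_le_two) _
      _ ≤ (N : ℝ≥0∞)⁻¹ * ∑ _i ∈ Finset.Icc 1 N, (ENNReal.ofReal εr + ENNReal.ofReal εr) :=
          mul_le_mul_right (Finset.sum_le_sum hWterm) _
      _ = 2 * ENNReal.ofReal εr := by
          rw [Finset.sum_const, hcard, nsmul_eq_mul, ← mul_assoc,
            ENNReal.inv_mul_cancel (by exact_mod_cast Nat.cast_ne_zero.2 (show N ≠ 0 by omega)) (ENNReal.natCast_ne_top N), one_mul]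
          ring
  -- combine
  calc eLpNorm (fun x =>
        (∑ k ∈ Finset.range K, ((N : ℝ)⁻¹ * ∑ i ∈ Finset.Icc 1 N,
          Set.indicator {z : X | κ ((⇑T.symm)^[i] z) = k}
            (fun z => f ((⇑T)^[i] ((S k) ((⇑T.symm)^[i] z))) - f z) x))
        + ((N : ℝ)⁻¹ * ∑ i ∈ Finset.Icc 1 N,
          Set.indicator {z : X | K ≤ κ ((⇑T.symm)^[i] z)}
            (fun z => f ((⇑T)^[i] (R ((⇑T.symm)^[i] z))) - f z) x)) 2 μ
      ≤ eLpNorm (fun x => ∑ k ∈ Finset.range K, ((N : ℝ)⁻¹ * ∑ i ∈ Finset.Icc 1 N,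
          Set.indicator {z : X | κ ((⇑T.symm)^[i] z) = k}
            (fun z => f ((⇑T)^[i] ((S k) ((⇑T.symm)^[i] z))) - f z) x)) 2 μ
        + eLpNorm (fun x => (N : ℝ)⁻¹ * ∑ i ∈ Finset.Icc 1 N,
          Set.indicator {z : X | K ≤ κ ((⇑T.symm)^[i] z)}
            (fun z => f ((⇑T)^[i] (R ((⇑T.symm)^[i] z))) - f z) x) 2 μ := by
        refine eLpNorm_add_le ?_ ?_ one_le_two
        · exact Finset.aestronglyMeasurable_fun_sum _ fun k _ =>
            (Finset.aestronglyMeasurable_fun_sum _ fun i _ =>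
              (hAEψ k i).indicator (mset1 i k)).const_mul _
        · exact (Finset.aestronglyMeasurable_fun_sum _ fun i _ =>
            (hAEφ i).indicator (mset2 i)).const_mul _
    _ ≤ (∑ k ∈ Finset.range K, ((N : ℝ≥0∞)⁻¹ * ∑ i ∈ Finset.Icc 1 N,
          eLpNorm (fun x => f ((⇑T)^[i] ((S k) ((⇑T.symm)^[i] x))) - f x) 2 μ))
        + 2 * ENNReal.ofReal εr := by
        refine add_le_add ?_ hW
        have h2 : (fun x => ∑ k ∈ Finset.range K, ((N : ℝ)⁻¹ * ∑ i ∈ Finset.Icc 1 N,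
            Set.indicator {z : X | κ ((⇑T.symm)^[i] z) = k}
              (fun z => f ((⇑T)^[i] ((S k) ((⇑T.symm)^[i] z))) - f z) x))
            = ∑ k ∈ Finset.range K, fun x => ((N : ℝ)⁻¹ * ∑ i ∈ Finset.Icc 1 N,
            Set.indicator {z : X | κ ((⇑T.symm)^[i] z) = k}
              (fun z => f ((⇑T)^[i] ((S k) ((⇑T.symm)^[i] z))) - f z) x) := by
          funext x
          rw [Finset.sum_apply]
        rw [h2]
        refine (eLpNorm_sum_le (fun k _ => ?_) one_le_two).trans (Finset.sum_le_sum hP)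
        exact (Finset.aestronglyMeasurable_fun_sum _ fun i _ =>
          (hAEψ k i).indicator (mset1 i k)).const_mul _
    _ ≤ ENNReal.ofReal εr + 2 * ENNReal.ofReal εr := add_le_add_left (hN₀ N hNN₀) _
    _ ≤ ε := h3ε
end

section
/- Let (X, μ) be a σ-finite measure space and T a bimeasurable bijection of X preserving μ, such that the only f ∈ L²(X, μ) with f ∘ T = f μ-almost everywhere is f = 0. Then for all measurable sets A and B with μ(A) < ∞ and μ(B) < ∞, (1/N) ∑_{i=1}^{N} μ(Tⁱ(A) ∩ B) → 0 as N → ∞. -/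
open MeasureTheory Filter Topology Function
open scoped symmDiff ENNReal

section Aux

variable {X : Type*} [MeasurableSpace X] {μ : Measure X}

private lemma indicatorConstLp_set_congr {s t : Set X} (h : s = t)
    (hs : MeasurableSet s) (hsf : μ s ≠ ∞) (ht : MeasurableSet t) (htf : μ t ≠ ∞) :
    (indicatorConstLp 2 hs hsf (1 : ℝ) : Lp ℝ 2 μ) = indicatorConstLp 2 ht htf (1 : ℝ) := by
  subst h; rfl

private lemma iterate_comp_indicator (S : X → X) (hS : MeasurePreserving S μ μ)
    {A : Set X} (hA : MeasurableSet A) (hAfin : μ A ≠ ∞) (k : ℕ) :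
    (⇑((Lp.compMeasurePreservingₗᵢ (E := ℝ) (p := 2) ℝ S hS).toContinuousLinearMap))^[k]
        (indicatorConstLp 2 hA hAfin (1 : ℝ))
      = indicatorConstLp 2 (hA.preimage (hS.iterate k).measurable)
          (by rw [(hS.iterate k).measure_preimage hA.nullMeasurableSet]; exact hAfin) (1 : ℝ) := by
  induction k with
  | zero => simp only [Function.iterate_zero, id_eq]
  | succ n ih =>
      rw [Function.iterate_succ_apply', ih]
      refine Eq.trans ?_ (indicatorConstLp_set_congr
        (s := S ⁻¹' (S^[n] ⁻¹' A)) (by rw [← Set.preimage_comp, ← Function.iterate_succ])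
        ((hA.preimage (hS.iterate n).measurable).preimage hS.measurable)
        (by rw [hS.measure_preimage ((hA.preimage (hS.iterate n).measurable)).nullMeasurableSet,
              (hS.iterate n).measure_preimage hA.nullMeasurableSet]; exact hAfin) _ _)
      exact Lp.indicatorConstLp_compMeasurePreserving _ _ _ hS

end Aux

set_option synthInstance.maxHeartbeats 1000000 in
set_option maxHeartbeats 1000000 in
/-- If `T` is a measure-preserving automorphism of a σ-finite measure space `(X, μ)`
whose only invariant `L²` function is `0`, then for all measurable `A, B` of finite
measure the Cesàro averages `(1/N) ∑_{i=1}^{N} μ(Tⁱ(A) ∩ B)` tend to `0`. -/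
theorem statement9 {X : Type*} [MeasurableSpace X] (μ : Measure X) [SigmaFinite μ]
    (T : X ≃ᵐ X) (hT : MeasurePreserving (⇑T) μ μ)
    (hcont : ∀ f : X → ℝ, MemLp f 2 μ → (fun x => f (T x)) =ᵐ[μ] f → f =ᵐ[μ] 0)
    (A B : Set X) (hA : MeasurableSet A) (hB : MeasurableSet B)
    (hAfin : μ A < ∞) (hBfin : μ B < ∞) :
    Tendsto (fun N : ℕ =>
        (N : ℝ)⁻¹ * ∑ i ∈ Finset.Icc 1 N, (μ ((⇑T)^[i] '' A ∩ B)).toReal)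
      atTop (𝓝 0) := by
  have hTs : MeasurePreserving (⇑T.symm) μ μ := hT.symm T
  set U : Lp ℝ 2 μ →L[ℝ] Lp ℝ 2 μ :=
    (Lp.compMeasurePreservingₗᵢ (E := ℝ) (p := 2) ℝ (⇑T.symm) hTs).toContinuousLinearMap with hU
  set f : Lp ℝ 2 μ := indicatorConstLp 2 hA hAfin.ne (1 : ℝ) with hf
  set g : Lp ℝ 2 μ := indicatorConstLp 2 hB hBfin.ne (1 : ℝ) with hg
  -- every fixed point of U is zero
  have hfix : ∀ w : Lp ℝ 2 μ, U w = w → w = 0 := by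
    intro w hw
    have h1 : ((w : X → ℝ) ∘ ⇑T.symm) =ᵐ[μ] (w : X → ℝ) := by
      have h := Lp.coeFn_compMeasurePreserving (μ := μ) w hTs
      rw [show Lp.compMeasurePreserving (⇑T.symm) hTs w = U w from rfl, hw] at h
      exact h.symm
    have h3 := h1.comp_tendsto hT.quasiMeasurePreserving.tendsto_ae
    have h2 : (fun x => (w : X → ℝ) (T x)) =ᵐ[μ] (w : X → ℝ) := by
      refine EventuallyEq.symm ?_
      refine EventuallyEq.trans ?_ h3
      filter_upwards with x
      simp [Function.comp]
    have h0 : (w : X → ℝ) =ᵐ[μ] 0 := hcont _ (Lp.memLp w) h2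
    exact Lp.eq_zero_iff_ae_eq_zero.mpr h0
  -- mean ergodic theorem
  have hUnorm : ‖U‖ ≤ 1 := LinearIsometry.norm_toContinuousLinearMap_le _
  have key : Tendsto (fun N => birkhoffAverage ℝ (⇑U) _root_.id N (U f)) atTop (𝓝 0) := by
    have h := U.tendsto_birkhoffAverage_orthogonalProjection hUnorm (U f)
    set v := (U.eqLocus (1 : Lp ℝ 2 μ →L[ℝ] Lp ℝ 2 μ)).orthogonalProjectionOnto (U f) with hv
    have hz : (v : Lp ℝ 2 μ) = 0 := hfix _ (by have h := v.2; rw [LinearMap.mem_eqLocus] at h; exact h)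
    rw [hz] at h
    exact h
  -- pair with g
  have key2 : Tendsto (fun N => (inner ℝ (birkhoffAverage ℝ (⇑U) _root_.id N (U f)) g : ℝ))
      atTop (𝓝 0) := by
    have h := Filter.Tendsto.inner (𝕜 := ℝ) key (tendsto_const_nhds (x := g))
    simpa using h
  -- identify the inner products
  have hinner : ∀ i : ℕ, (inner ℝ ((⇑U)^[i] f) g : ℝ) = (μ ((⇑T)^[i] '' A ∩ B)).toReal := by
    intro i
    rw [hf, hU, iterate_comp_indicator (⇑T.symm) hTs hA hAfin.ne i, real_inner_comm, hg,
      L2.inner_indicatorConstLp_one hB hBfin.ne]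
    have himg : (⇑T)^[i] '' A = (⇑T.symm)^[i] ⁻¹' A :=
      congrFun (Set.image_eq_preimage_of_inverse (T.left_inv.iterate i) (T.right_inv.iterate i)) A
    rw [himg]
    set S := (⇑T.symm)^[i] ⁻¹' A with hS
    have hSmeas : MeasurableSet S := hA.preimage (hTs.iterate i).measurable
    have hfin' : μ S ≠ ∞ := by
      rw [hS, (hTs.iterate i).measure_preimage hA.nullMeasurableSet]; exact hAfin.ne
    have hco := indicatorConstLp_coeFn (p := 2) (μ := μ) (hs := hSmeas) (hμs := hfin')
      (c := (1 : ℝ))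
    have hie : ∫ x in B, (indicatorConstLp 2 hSmeas
        (by rw [(hTs.iterate i).measure_preimage hA.nullMeasurableSet]; exact hAfin.ne) (1:ℝ)
          : Lp ℝ 2 μ) x ∂μ = ∫ x in B, S.indicator (fun _ => (1:ℝ)) x ∂μ := by
      refine setIntegral_congr_ae hB ?_
      filter_upwards [hco] with x hx _
      exact hx
    rw [hie, setIntegral_indicator hSmeas, Set.inter_comm B S, setIntegral_const, smul_eq_mul,
      mul_one]
    rfl
  refine key2.congr fun N => ?_
  rw [birkhoffAverage, birkhoffSum, real_inner_smul_left, sum_inner,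
    show Finset.Icc 1 N = Finset.Ico 1 (N+1) from (Finset.Ico_add_one_right_eq_Icc 1 N).symm,
    Finset.sum_Ico_eq_sum_range]
  simp only [Nat.add_sub_cancel, smul_eq_mul]
  congr 1
  refine Finset.sum_congr rfl fun k _ => ?_
  rw [show _root_.id ((⇑U)^[k] (U f)) = (⇑U)^[k+1] f from
    (Function.iterate_succ_apply (⇑U) k f).symm, hinner (k+1), Nat.add_comm 1 k]
end
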